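/- arXiv:1901.06407 — 2 statements merged into one kernel-verified Lean document; each statement's English description precedes it below -/
import Mathlib

section
/- For distinct m, k ∈ {1, ..., n+1} with m ≠ k, no state of the model M_k satisfies the formula A_m; in particular the formulas A_1, ..., A_{n+1} are pairwise 'exclusive' over the family of models {M_1, ..., M_{n+1}}. -/
/-- Formulas of basic modal logic: propositional variables, ⊥, →, and [b]. -/
inductive MF : Type where
  | var : ℕ → MF
  | bot : MF
  | imp : MF → MF → MF
  | box : MF → MF

def MF.neg (φ : MF) : MF := .imp φ .bot
def MF.top : MF := .imp .bot .bot
def MF.and (φ ψ : MF) : MF := .neg (.imp φ (.neg ψ))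
def MF.dia (φ : MF) : MF := .neg (.box (.neg φ))

/-- ⟨b⟩^k φ -/
def MF.diaN : ℕ → MF → MF
  | 0, φ => φ
  | k + 1, φ => .dia (MF.diaN k φ)

/-- Standard Kripke satisfaction over a model (S, R, V). -/
def sat {S : Type} (R : S → S → Prop) (V : ℕ → S → Prop) : S → MF → Prop
  | s, .var p => V p s
  | _, .bot => False
  | s, .imp φ ψ => sat R V s φ → sat R V s ψ
  | s, .box φ => ∀ t, R s t → sat R V t φ
/-- States of the model M_m: root r, reflexive state t, and s_1, ..., s_m
(here `St.s i` for `i : Fin m` represents the paper's s_{i+1}). -/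
inductive St (m : ℕ) : Type where
  | r : St m
  | t : St m
  | s : Fin m → St m

/-- The base relation {(r,t), (t,t), (r,s_1)} ∪ {(s_i, s_{i+1}) : 1 ≤ i ≤ m-1}. -/
def baseRel (m : ℕ) : St m → St m → Prop := fun x y =>
  (x = .r ∧ y = .t) ∨ (x = .t ∧ y = .t) ∨
  (∃ h : 0 < m, x = .r ∧ y = .s ⟨0, h⟩) ∨
  (∃ i j : Fin m, x = .s i ∧ y = .s j ∧ (j : ℕ) = (i : ℕ) + 1)

/-- R_b: the transitive closure of the base relation. -/
def Rb (m : ℕ) : St m → St m → Prop := Relation.TransGen (baseRel m)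

/-- The valuation of M_m: all propositional variables are false everywhere. -/
def Vempty (m : ℕ) : ℕ → St m → Prop := fun _ _ => False

/-- A_m = ⟨b⟩^m [b]⊥ ∧ ¬⟨b⟩^{m+1} [b]⊥ ∧ ⟨b⟩(⟨b⟩⊤ ∧ [b]⟨b⟩⊤). -/
def Aform (m : ℕ) : MF :=
  .and (MF.diaN m (.box .bot))
    (.and (.neg (MF.diaN (m + 1) (.box .bot)))
      (.dia (.and (.dia .top) (.box (.dia .top)))))

/-- B_m = ⟨b⟩A_m. -/
def Bform (m : ℕ) : MF := .dia (Aform m)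

section Aux

open Classical

lemma sat_and {S : Type} (R : S → S → Prop) (V : ℕ → S → Prop) (x : S) (φ ψ : MF) :
    sat R V x (.and φ ψ) ↔ sat R V x φ ∧ sat R V x ψ := by
  simp only [MF.and, MF.neg, sat]
  tauto

lemma sat_dia {S : Type} (R : S → S → Prop) (V : ℕ → S → Prop) (x : S) (φ : MF) :
    sat R V x (.dia φ) ↔ ∃ y, R x y ∧ sat R V y φ := by
  simp only [MF.dia, MF.neg, sat]
  constructor
  · intro h
    by_contra hc
    push_neg at hc
    exact h fun y hy hs => hc y hy hs
  · rintro ⟨y, hy, hs⟩ h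
    exact h y hy hs

lemma sat_neg {S : Type} (R : S → S → Prop) (V : ℕ → S → Prop) (x : S) (φ : MF) :
    sat R V x (.neg φ) ↔ ¬ sat R V x φ := by
  simp only [MF.neg, sat]

lemma sat_box_bot {S : Type} (R : S → S → Prop) (V : ℕ → S → Prop) (x : S) :
    sat R V x (.box .bot) ↔ ∀ y, ¬ R x y := by
  simp only [sat]

-- successors of t
lemma succ_t {k : ℕ} {y : St k} (h : Rb k .t y) : y = .t := by
  induction h with
  | single h =>
    rcases h with ⟨h1, _⟩ | ⟨_, h2⟩ | ⟨_, h1, _⟩ | ⟨i, j, h1, _, _⟩ <;> simp_all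
  | tail _ h ih =>
    subst ih
    rcases h with ⟨h1, _⟩ | ⟨_, h2⟩ | ⟨_, h1, _⟩ | ⟨i, j, h1, _, _⟩ <;> simp_all

-- successors of s i
lemma succ_s {k : ℕ} {i : Fin k} {y : St k} (h : Rb k (.s i) y) :
    ∃ j : Fin k, y = .s j ∧ (i : ℕ) < (j : ℕ) := by
  induction h with
  | single h =>
    rcases h with ⟨h1, _⟩ | ⟨h1, _⟩ | ⟨_, h1, _⟩ | ⟨a, b, h1, h2, h3⟩
    · simp_all
    · simp_all
    · simp_all
    · refine ⟨b, h2, ?_⟩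
      have : a = i := by injection h1.symm
      omega
  | tail _ h ih =>
    obtain ⟨j, rfl, hij⟩ := ih
    rcases h with ⟨h1, _⟩ | ⟨h1, _⟩ | ⟨_, h1, _⟩ | ⟨a, b, h1, h2, h3⟩
    · simp_all
    · simp_all
    · simp_all
    · refine ⟨b, h2, ?_⟩
      have : a = j := by injection h1.symm
      omega

lemma rb_s_s_aux {k : ℕ} : ∀ (d : ℕ) (i j : Fin k), (j : ℕ) = (i : ℕ) + d + 1 →
    Rb k (.s i) (.s j) := by
  intro d
  induction d with
  | zero =>
    intro i j hij
    exact Relation.TransGen.single (Or.inr (Or.inr (Or.inr ⟨i, j, rfl, rfl, by omega⟩)))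
  | succ p ih =>
    intro i j hij
    have h1 : (i : ℕ) + 1 < k := by have := j.isLt; omega
    refine Relation.TransGen.head (Or.inr (Or.inr (Or.inr ⟨i, ⟨(i : ℕ) + 1, h1⟩, rfl, rfl, rfl⟩))) ?_
    exact ih _ _ (by simp; omega)

lemma rb_s_s {k : ℕ} (i j : Fin k) (hij : (i : ℕ) < (j : ℕ)) :
    Rb k (.s i) (.s j) :=
  rb_s_s_aux ((j : ℕ) - (i : ℕ) - 1) i j (by omega)

lemma rb_r_s {k : ℕ} (i : Fin k) : Rb k (.r) (.s i) := by
  have h0 : 0 < k := i.pos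
  have base : Rb k (.r) (.s ⟨0, h0⟩) :=
    Relation.TransGen.single (Or.inr (Or.inr (Or.inl ⟨h0, rfl, rfl⟩)))
  rcases Nat.eq_zero_or_pos (i : ℕ) with h | h
  · have : i = ⟨0, h0⟩ := Fin.ext h
    rwa [this]
  · exact Relation.TransGen.trans base (rb_s_s _ _ h)

lemma succ_r {k : ℕ} {y : St k} (h : Rb k .r y) : y = .t ∨ ∃ i : Fin k, y = .s i := by
  induction h with
  | single h =>
    rcases h with ⟨_, h2⟩ | ⟨h1, _⟩ | ⟨hk, _, h2⟩ | ⟨a, b, h1, h2, _⟩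
    · exact Or.inl h2
    · simp_all
    · exact Or.inr ⟨_, h2⟩
    · simp_all
  | tail _ h ih =>
    rcases ih with rfl | ⟨i, rfl⟩
    · exact Or.inl (succ_t (Relation.TransGen.single h))
    · obtain ⟨j, rfl, _⟩ := succ_s (Relation.TransGen.single h)
      exact Or.inr ⟨j, rfl⟩

-- t is not a deadend reachable in any number of dia steps
lemma not_diaN_t {k : ℕ} (j : ℕ) : ¬ sat (Rb k) (Vempty k) .t (MF.diaN j (.box .bot)) := by
  induction j with
  | zero =>
    rw [MF.diaN, sat_box_bot]
    intro h
    exact h .t (Relation.TransGen.single (Or.inr (Or.inl ⟨rfl, rfl⟩)))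
  | succ p ih =>
    rw [MF.diaN, sat_dia]
    rintro ⟨y, hy, hs⟩
    rw [succ_t hy] at hs
    exact ih hs

-- upper bound from s i
lemma diaN_s_bound {k : ℕ} : ∀ (j : ℕ) (i : Fin k),
    sat (Rb k) (Vempty k) (.s i) (MF.diaN j (.box .bot)) → (i : ℕ) + j < k := by
  intro j
  induction j with
  | zero => intro i _; simpa using i.isLt
  | succ p ih =>
    intro i h
    rw [MF.diaN, sat_dia] at h
    obtain ⟨y, hy, hs⟩ := h
    obtain ⟨l, rfl, hil⟩ := succ_s hy
    have := ih l hs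
    omega

-- realizability from s i
lemma diaN_s_exact {k : ℕ} : ∀ (j : ℕ) (i : Fin k), (i : ℕ) + j + 1 = k →
    sat (Rb k) (Vempty k) (.s i) (MF.diaN j (.box .bot)) := by
  intro j
  induction j with
  | zero =>
    intro i hi
    rw [MF.diaN, sat_box_bot]
    intro y hy
    obtain ⟨l, _, hl⟩ := succ_s hy
    have := l.isLt
    omega
  | succ p ih =>
    intro i hi
    rw [MF.diaN, sat_dia]
    have hlt : (i : ℕ) + 1 < k := by omega
    refine ⟨.s ⟨(i : ℕ) + 1, hlt⟩, rb_s_s i _ (by simp), ih _ (by simp; omega)⟩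

lemma diaN_r {k : ℕ} (j : ℕ) (hj1 : 1 ≤ j) (hj2 : j ≤ k) :
    sat (Rb k) (Vempty k) .r (MF.diaN j (.box .bot)) := by
  obtain ⟨p, rfl⟩ := Nat.exists_eq_add_of_le' hj1
  rw [MF.diaN, sat_dia]
  have hkj : k - (p + 1) < k := by omega
  refine ⟨.s ⟨k - (p + 1), hkj⟩, rb_r_s _, diaN_s_exact p _ (by simp; omega)⟩

end Aux

/-- For distinct m, k ∈ {1, ..., n+1}, no state of M_k satisfies A_m. -/
theorem stmt4 (n m k : ℕ) (hm1 : 1 ≤ m) (hm2 : m ≤ n + 1)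
    (hk1 : 1 ≤ k) (hk2 : k ≤ n + 1) (hmk : m ≠ k) (x : St k) :
    ¬ sat (Rb k) (Vempty k) x (Aform m) := by
  intro h
  rw [Aform, sat_and, sat_and] at h
  obtain ⟨h1, h2, h3⟩ := h
  rw [sat_neg] at h2
  cases x with
  | t => exact not_diaN_t m h1
  | r =>
    -- show m ≤ k, then m < k, then contradiction with h2
    obtain ⟨p, rfl⟩ := Nat.exists_eq_add_of_le' hm1
    rw [MF.diaN, sat_dia] at h1
    obtain ⟨y, hy, hs⟩ := h1
    rcases succ_r hy with rfl | ⟨i, rfl⟩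
    · exact not_diaN_t p hs
    · have hb := diaN_s_bound p i hs
      exact h2 (diaN_r (p + 1 + 1) (by omega) (by omega))
  | s i =>
    rw [sat_dia] at h3
    obtain ⟨y, hy, hs⟩ := h3
    obtain ⟨j, rfl, _⟩ := succ_s hy
    rw [sat_and] at hs
    obtain ⟨hd, hb⟩ := hs
    rw [sat_dia] at hd
    obtain ⟨z, hz, _⟩ := hd
    obtain ⟨l, rfl, hjl⟩ := succ_s hz
    have hlk := l.isLt
    have hk1' : k - 1 < k := by omega
    have hlast := hb _ (rb_s_s j ⟨k - 1, hk1'⟩ (by simp; omega))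
    rw [sat_dia] at hlast
    obtain ⟨w, hw, _⟩ := hlast
    obtain ⟨q, rfl, hq⟩ := succ_s hw
    have := q.isLt
    simp at hq
    omega
end

section
/- Let M be a Kripke model, s_0 a state satisfying Θ ∧ φ' where p_{n+1} is universally true in M, and let M'' be the model obtained from M by disjointly attaching the models M_1, ..., M_{n+1} and adding an R_b-edge from each state x of M to the root r_m of M_m exactly when M, x ⊨ p_m (for 1 ≤ m ≤ n+1). Then for every state x of M and every i ∈ {1, ..., n+1}: M'', x ⊨ ⟨b⟩A_i if and only if M, x ⊨ p_i. -/
/-- The relativized translation: ([b]φ)' = [b](p → φ'). -/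
def relT (p : ℕ) : MF → MF
  | .var q => .var q
  | .bot => .bot
  | .imp a b => .imp (relT p a) (relT p b)
  | .box a => .box (.imp (.var p) (relT p a))

/-- The variable q occurs in a formula. -/
def occurs (q : ℕ) : MF → Prop
  | .var r => r = q
  | .bot => False
  | .imp a b => occurs q a ∨ occurs q b
  | .box a => occurs q a

/-- The smallest subset of S containing s0 and closed under:
x ∈ S', x R y, y ⊨ p implies y ∈ S'. -/
inductive Gen {S : Type} (R : S → S → Prop) (V : ℕ → S → Prop) (p : ℕ) (s0 : S) : S → Prop
  | base : Gen R V p s0 s0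
  | step {x y : S} : Gen R V p s0 x → R x y → V p y → Gen R V p s0 y

/-- Modal formulas with the iteration modality [b*]. -/
inductive MFs : Type where
  | var : ℕ → MFs
  | bot : MFs
  | imp : MFs → MFs → MFs
  | box : MFs → MFs
  | boxS : MFs → MFs

def MFs.neg (φ : MFs) : MFs := .imp φ .bot
def MFs.top : MFs := .imp .bot .bot
def MFs.and (φ ψ : MFs) : MFs := .neg (.imp φ (.neg ψ))
def MFs.dia (φ : MFs) : MFs := .neg (.box (.neg φ))

/-- Satisfaction with [b*] interpreted via the reflexive-transitive closure. -/
def sats {S : Type} (R : S → S → Prop) (V : ℕ → S → Prop) : S → MFs → Prop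
  | s, .var p => V p s
  | _, .bot => False
  | s, .imp φ ψ => sats R V s φ → sats R V s ψ
  | s, .box φ => ∀ t, R s t → sats R V t φ
  | s, .boxS φ => ∀ t, Relation.ReflTransGen R s t → sats R V t φ

/-- Embedding of basic modal formulas into the language with [b*]. -/
def embed : MF → MFs
  | .var q => .var q
  | .bot => .bot
  | .imp a b => .imp (embed a) (embed b)
  | .box a => .box (embed a)

/-- Θ = p_{n+1} ∧ [b*](⟨b⟩p_{n+1} → p_{n+1}); the fresh variable p_{n+1}
is represented by `MFs.var n` (variables p_1, ..., p_n are var 0, ..., var (n-1)). -/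
def Theta (n : ℕ) : MFs :=
  MFs.and (.var n) (.boxS (.imp (MFs.dia (.var n)) (.var n)))

/-- All variables of φ are among p_1, ..., p_n (i.e. var 0, ..., var (n-1)). -/
def varsLt (n : ℕ) (φ : MF) : Prop := ∀ q : ℕ, occurs q φ → q < n

/-- States of the composite model M'': the original states S together with
the disjointly attached models M_1, ..., M_{n+1} (the member `⟨m, a⟩`
with `m : Fin (n+1)` is state a of the model M_{m+1}). -/
def CS (n : ℕ) (S : Type) : Type := S ⊕ (Σ m : Fin (n + 1), St ((m : ℕ) + 1))

/-- The accessibility relation of M'': R inside M, R_b inside each attached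
M_m, plus an edge from x ∈ M to the root r_m of M_m exactly when M, x ⊨ p_m
(variable p_m is `var (m-1)`, i.e. `V m x` for `m : Fin (n+1)`). -/
def CR (n : ℕ) {S : Type} (R : S → S → Prop) (V : ℕ → S → Prop) :
    CS n S → CS n S → Prop
  | .inl x, .inl y => R x y
  | .inl x, .inr ⟨m, a⟩ => a = St.r ∧ V m x
  | .inr _, .inl _ => False
  | .inr ⟨m, a⟩, .inr ⟨m', b⟩ => ∃ h : m = m', Rb ((m' : ℕ) + 1) (h ▸ a) b

/-- The valuation of M'': as in M on the original states, and all variables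
false on the attached models. -/
def CV (n : ℕ) {S : Type} (V : ℕ → S → Prop) : ℕ → CS n S → Prop
  | q, .inl x => V q x
  | _, .inr _ => False


section Aux

lemma sat_and_iff {S : Type} (R : S → S → Prop) (V : ℕ → S → Prop) {s : S} {φ ψ : MF} :
    sat R V s (MF.and φ ψ) ↔ sat R V s φ ∧ sat R V s ψ := by
  simp only [MF.and, MF.neg, sat]
  tauto

lemma sat_dia_iff {S : Type} (R : S → S → Prop) (V : ℕ → S → Prop) {s : S} {φ : MF} :
    sat R V s (MF.dia φ) ↔ ∃ w, R s w ∧ sat R V w φ := by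
  simp only [MF.dia, MF.neg, sat]
  constructor
  · intro h
    by_contra hc
    push_neg at hc
    exact h fun w hw hs => hc w hw hs
  · rintro ⟨w, hw, hs⟩ h
    exact h w hw hs

lemma sat_top {S : Type} (R : S → S → Prop) (V : ℕ → S → Prop) (s : S) :
    sat R V s MF.top := by
  simp [MF.top, sat]

lemma base_t {m : ℕ} {b : St m} (h : baseRel m St.t b) : b = St.t := by
  rcases h with ⟨h1, rfl⟩ | ⟨-, rfl⟩ | ⟨_, h1, -⟩ | ⟨i, j, h1, -, -⟩ <;> first | rfl | simp at h1

lemma base_s {m : ℕ} {i : Fin m} {b : St m} (h : baseRel m (St.s i) b) :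
    ∃ j : Fin m, b = St.s j ∧ (j : ℕ) = (i : ℕ) + 1 := by
  rcases h with ⟨h1, -⟩ | ⟨h1, -⟩ | ⟨_, h1, -⟩ | ⟨i', j, h1, rfl, h3⟩
  · simp at h1
  · simp at h1
  · simp at h1
  · obtain ⟨rfl⟩ : i' = i := by simpa [eq_comm] using h1
    exact ⟨j, rfl, h3⟩

lemma base_r {m : ℕ} {b : St m} (h : baseRel m St.r b) :
    b = St.t ∨ ∃ j : Fin m, b = St.s j := by
  rcases h with ⟨-, rfl⟩ | ⟨h1, -⟩ | ⟨_, -, rfl⟩ | ⟨i, j, h1, -, -⟩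
  · exact Or.inl rfl
  · simp at h1
  · exact Or.inr ⟨_, rfl⟩
  · simp at h1

lemma rb_t {m : ℕ} {b : St m} (h : Rb m St.t b) : b = St.t := by
  induction h with
  | single h => exact base_t h
  | tail _ hr ih => exact base_t (ih ▸ hr)

lemma rb_s {m : ℕ} {i : Fin m} {b : St m} (h : Rb m (St.s i) b) :
    ∃ j : Fin m, b = St.s j ∧ (i : ℕ) < (j : ℕ) := by
  induction h with
  | single h =>
    obtain ⟨j, rfl, hj⟩ := base_s h
    exact ⟨j, rfl, by omega⟩
  | tail _ hr ih =>
    obtain ⟨j, rfl, hij⟩ := ih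
    obtain ⟨j', rfl, hj'⟩ := base_s hr
    exact ⟨j', rfl, by omega⟩

lemma rb_r {m : ℕ} {b : St m} (h : Rb m St.r b) :
    b = St.t ∨ ∃ j : Fin m, b = St.s j := by
  induction h with
  | single h => exact base_r h
  | tail _ hr ih =>
    rcases ih with rfl | ⟨j, rfl⟩
    · exact Or.inl (base_t hr)
    · obtain ⟨j', rfl, -⟩ := base_s hr
      exact Or.inr ⟨j', rfl⟩

lemma rb_r_s_s15 {M : ℕ} : ∀ (jn : ℕ) (h : jn < M + 1), Rb (M + 1) St.r (St.s ⟨jn, h⟩)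
  | 0, h => Relation.TransGen.single (Or.inr (Or.inr (Or.inl ⟨Nat.succ_pos M, rfl, rfl⟩)))
  | jn + 1, h =>
    Relation.TransGen.tail (rb_r_s_s15 jn (by omega))
      (Or.inr (Or.inr (Or.inr ⟨⟨jn, by omega⟩, ⟨jn + 1, h⟩, rfl, rfl, rfl⟩)))

section Comp
variable (n : ℕ) {S : Type} (R : S → S → Prop) (V : ℕ → S → Prop)

lemma cr_inr_elim {m : Fin (n + 1)} {a : St ((m : ℕ) + 1)} {w : CS n S}
    (h : CR n R V (Sum.inr ⟨m, a⟩) w) :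
    ∃ b : St ((m : ℕ) + 1), w = Sum.inr ⟨m, b⟩ ∧ Rb ((m : ℕ) + 1) a b := by
  match w with
  | Sum.inl y => exact h.elim
  | Sum.inr ⟨m', b⟩ =>
    obtain ⟨rfl, hrb⟩ := h
    exact ⟨b, rfl, hrb⟩

lemma cr_inl_elim {x : S} {w : CS n S} (h : CR n R V (Sum.inl x) w) :
    (∃ y, w = Sum.inl y ∧ R x y) ∨
    (∃ m : Fin (n + 1), w = Sum.inr ⟨m, St.r⟩ ∧ V m x) := by
  match w with
  | Sum.inl y => exact Or.inl ⟨y, rfl, h⟩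
  | Sum.inr ⟨m, a⟩ =>
    obtain ⟨rfl, hv⟩ := h
    exact Or.inr ⟨m, rfl, hv⟩

lemma chain_lem (m : Fin (n + 1)) :
    ∀ (k : ℕ) (j : Fin ((m : ℕ) + 1)), (j : ℕ) + k = (m : ℕ) →
      sat (CR n R V) (CV n V) (Sum.inr ⟨m, St.s j⟩) (MF.diaN k (.box .bot)) := by
  intro k
  induction k with
  | zero =>
    intro j hj w hw
    obtain ⟨b, rfl, hrb⟩ := cr_inr_elim n R V hw
    obtain ⟨j', rfl, hlt⟩ := rb_s hrb
    have := j'.isLt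
    omega
  | succ k ih =>
    intro j hj
    refine (sat_dia_iff _ _).mpr
      ⟨Sum.inr ⟨m, St.s ⟨(j : ℕ) + 1, by omega⟩⟩,
        ⟨rfl, Relation.TransGen.single
          (Or.inr (Or.inr (Or.inr ⟨j, ⟨(j : ℕ) + 1, by omega⟩, rfl, rfl, rfl⟩)))⟩,
        ih ⟨(j : ℕ) + 1, by omega⟩ (by simp; omega)⟩

lemma root_lem (m : Fin (n + 1)) (k : ℕ) (hk : k ≤ (m : ℕ)) :
    sat (CR n R V) (CV n V) (Sum.inr ⟨m, St.r⟩) (MF.diaN (k + 1) (.box .bot)) := by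
  refine (sat_dia_iff _ _).mpr
    ⟨Sum.inr ⟨m, St.s ⟨(m : ℕ) - k, by omega⟩⟩,
      ⟨rfl, rb_r_s_s15 _ _⟩, chain_lem n R V m k ⟨(m : ℕ) - k, by omega⟩ (by simp; omega)⟩

lemma upper_lem (m : Fin (n + 1)) :
    ∀ (k : ℕ) (a : St ((m : ℕ) + 1)),
      sat (CR n R V) (CV n V) (Sum.inr ⟨m, a⟩) (MF.diaN k (.box .bot)) →
      (a = St.t → False) ∧ (∀ j : Fin ((m : ℕ) + 1), a = St.s j → k + (j : ℕ) ≤ (m : ℕ)) ∧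
      (a = St.r → k ≤ (m : ℕ) + 1) := by
  intro k
  induction k with
  | zero =>
    intro a h
    refine ⟨?_, ?_, fun _ => by omega⟩
    · rintro rfl
      exact h (Sum.inr ⟨m, St.t⟩) ⟨rfl, Relation.TransGen.single (Or.inr (Or.inl ⟨rfl, rfl⟩))⟩
    · intro j _
      have := j.isLt
      omega
  | succ k ih =>
    intro a h
    obtain ⟨w, hw, hs⟩ := (sat_dia_iff _ _).mp h
    obtain ⟨b, rfl, hrb⟩ := cr_inr_elim n R V hw
    refine ⟨?_, ?_, ?_⟩
    · rintro rfl
      exact (ih b hs).1 (rb_t hrb)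
    · rintro j rfl
      obtain ⟨j', rfl, hlt⟩ := rb_s hrb
      have := (ih _ hs).2.1 j' rfl
      omega
    · rintro rfl
      rcases rb_r hrb with rfl | ⟨j, rfl⟩
      · exact ((ih _ hs).1 rfl).elim
      · have := (ih _ hs).2.1 j rfl
        omega

lemma third_lem (m : Fin (n + 1)) :
    sat (CR n R V) (CV n V) (Sum.inr ⟨m, St.r⟩)
      (MF.dia (.and (.dia .top) (.box (.dia .top)))) := by
  have htt : CR n R V (Sum.inr ⟨m, St.t⟩) (Sum.inr ⟨m, St.t⟩) :=
    ⟨rfl, Relation.TransGen.single (Or.inr (Or.inl ⟨rfl, rfl⟩))⟩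
  refine (sat_dia_iff _ _).mpr
    ⟨Sum.inr ⟨m, St.t⟩, ⟨rfl, Relation.TransGen.single (Or.inl ⟨rfl, rfl⟩)⟩, ?_⟩
  refine (sat_and_iff _ _).mpr ⟨(sat_dia_iff _ _).mpr ⟨_, htt, sat_top _ _ _⟩, ?_⟩
  intro w hw
  obtain ⟨b, rfl, hrb⟩ := cr_inr_elim n R V hw
  rw [rb_t hrb]
  exact (sat_dia_iff _ _).mpr ⟨_, htt, sat_top _ _ _⟩

end Comp
end Aux

/-- If p_{n+1} is universally true in M and s_0 ⊨ Θ ∧ φ', then in the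
composite model M'': for every state x of M and every i ∈ {1,...,n+1},
M'', x ⊨ ⟨b⟩A_i iff M, x ⊨ p_i. -/
theorem stmt15 (n : ℕ) {S : Type} (R : S → S → Prop) (V : ℕ → S → Prop)
    (φ : MF) (hφ : varsLt n φ) (hV : ∀ x : S, V n x)
    (s0 : S) (hs0 : sats R V s0 (MFs.and (Theta n) (embed (relT n φ))))
    (x : S) (i : Fin (n + 1)) :
    sat (CR n R V) (CV n V) (Sum.inl x) (MF.dia (Aform ((i : ℕ) + 1))) ↔ V i x := by
  constructor
  · intro h
    obtain ⟨w, hw, hA⟩ := (sat_dia_iff _ _).mp h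
    simp only [Aform] at hA
    obtain ⟨h1, h2'⟩ := (sat_and_iff _ _).mp hA
    obtain ⟨h2, h3⟩ := (sat_and_iff _ _).mp h2'
    rcases cr_inl_elim n R V hw with ⟨y, rfl, hxy⟩ | ⟨m, rfl, hv⟩
    · exfalso
      apply h2
      refine (sat_dia_iff _ _).mpr ⟨Sum.inr ⟨⟨n, by omega⟩, St.r⟩, ⟨rfl, hV y⟩, ?_⟩
      exact root_lem n R V ⟨n, by omega⟩ (i : ℕ) (by have := i.isLt; simpa using by omega)
    · have hup : (i : ℕ) + 1 ≤ (m : ℕ) + 1 :=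
        (upper_lem n R V m ((i : ℕ) + 1) St.r h1).2.2 rfl
      have hmi : (m : ℕ) ≤ (i : ℕ) := by
        by_contra hc
        push_neg at hc
        exact h2 (root_lem n R V m ((i : ℕ) + 1) (by omega))
      have : i = m := Fin.ext (by omega)
      rw [this]
      exact hv
  · intro hx
    refine (sat_dia_iff _ _).mpr ⟨Sum.inr ⟨i, St.r⟩, ⟨rfl, hx⟩, ?_⟩
    simp only [Aform]
    refine (sat_and_iff _ _).mpr ⟨root_lem n R V i (i : ℕ) le_rfl,
      (sat_and_iff _ _).mpr ⟨?_, third_lem n R V i⟩⟩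
    intro hbad
    have := (upper_lem n R V i ((i : ℕ) + 1 + 1) St.r hbad).2.2 rfl
    omega
end
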